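/- The function f(x) := ln(1 + x)/x, defined for x > 0, is strictly completely monotone: for every natural number n ≥ 0 and every x > 0, (−1)^n f^{(n)}(x) > 0. -/

import Mathlib

open Real Finset

private noncomputable def Saux (n : ℕ) (x : ℝ) : ℝ :=
  ∑ k ∈ Finset.range n, (x / (1 + x)) ^ (k + 1) / (k + 1)

private lemma hasDerivAt_base {x : ℝ} (hx : 0 < x) :
    HasDerivAt (fun y : ℝ => Real.log (1 + y)) (1 / (1 + x)) x := by
  have h1 : (1 : ℝ) + x ≠ 0 := by positivity
  simpa using ((hasDerivAt_id x).const_add 1).log h1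

private lemma hasDerivAt_G (n : ℕ) {x : ℝ} (hx : 0 < x) :
    HasDerivAt (fun y : ℝ => Real.log (1 + y) - Saux n y)
      (x ^ n / (1 + x) ^ (n + 1)) x := by
  induction n with
  | zero =>
    simpa [Saux] using (hasDerivAt_base hx).sub_const 0
  | succ n ih =>
    have h1 : (1 : ℝ) + x ≠ 0 := by positivity
    have hq : HasDerivAt (fun y : ℝ => y / (1 + y)) (1 / (1 + x) ^ 2) x := by
      have := (hasDerivAt_id x).div ((hasDerivAt_id x).const_add 1) h1
      simp only [id_eq] at this
      exact this.congr_deriv (by ring)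
    have hterm : HasDerivAt (fun y : ℝ => (y / (1 + y)) ^ (n + 1) / (n + 1))
        (x ^ n / (1 + x) ^ (n + 2)) x := by
      have := (hq.pow (n + 1)).div_const ((n : ℝ) + 1)
      refine this.congr_deriv ?_
      have hn : ((n : ℝ) + 1) ≠ 0 := by positivity
      rw [Nat.add_sub_cancel]; push_cast
      simp only [div_pow]
      field_simp
      ring
    have := ih.sub hterm
    have heq : (fun y : ℝ => Real.log (1 + y) - Saux n y - (y / (1 + y)) ^ (n + 1) / (n + 1))
        = fun y : ℝ => Real.log (1 + y) - Saux (n + 1) y := by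
      funext y
      simp [Saux, Finset.sum_range_succ]
      ring
    simp only [Pi.sub_def] at this
    rw [heq] at this
    refine this.congr_deriv ?_
    field_simp
    ring

private lemma iter_eq (n : ℕ) : ∀ x : ℝ, 0 < x →
    iteratedDeriv n (fun y : ℝ => Real.log (1 + y) / y) x
      = (-1) ^ n * n.factorial * (Real.log (1 + x) - Saux n x) / x ^ (n + 1) := by
  induction n with
  | zero =>
    intro x hx
    simp [Saux]
  | succ n ih =>
    intro x hx
    rw [iteratedDeriv_succ]
    have hev : iteratedDeriv n (fun y : ℝ => Real.log (1 + y) / y)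
        =ᶠ[nhds x] fun y : ℝ =>
          (-1) ^ n * n.factorial * (Real.log (1 + y) - Saux n y) / y ^ (n + 1) := by
      filter_upwards [IsOpen.mem_nhds isOpen_Ioi hx] with y hy
      exact ih y hy
    rw [hev.deriv_eq]
    have hxne : x ≠ 0 := ne_of_gt hx
    have h1 : (1 : ℝ) + x ≠ 0 := by positivity
    have hpow : HasDerivAt (fun y : ℝ => y ^ (n + 1)) ((n + 1 : ℝ) * x ^ n) x := by
      simpa using hasDerivAt_pow (n + 1) x
    have hnum : HasDerivAt
        (fun y : ℝ => (-1 : ℝ) ^ n * n.factorial * (Real.log (1 + y) - Saux n y))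
        ((-1) ^ n * n.factorial * (x ^ n / (1 + x) ^ (n + 1))) x :=
      (hasDerivAt_G n hx).const_mul _
    have hd := hnum.div hpow (pow_ne_zero _ hxne)
    simp only [Pi.div_def] at hd
    rw [hd.deriv]
    have hGsucc : Real.log (1 + x) - Saux (n + 1) x
        = Real.log (1 + x) - Saux n x - (x / (1 + x)) ^ (n + 1) / (n + 1) := by
      simp [Saux, Finset.sum_range_succ]; ring
    rw [hGsucc]
    have hfac : ((n + 1).factorial : ℝ) = (n + 1) * n.factorial := by
      push_cast [Nat.factorial_succ]; ring
    rw [pow_succ (-1 : ℝ) n, hfac]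
    have hn1 : ((n : ℝ) + 1) ≠ 0 := by positivity
    simp only [div_pow]
    field_simp
    ring

private lemma S_lt_log {x : ℝ} (hx : 0 < x) (n : ℕ) : Saux n x < Real.log (1 + x) := by
  set y : ℝ := x / (1 + x) with hy
  have h1 : (0 : ℝ) < 1 + x := by positivity
  have hy0 : 0 < y := div_pos hx h1
  have hy1 : y < 1 := by
    rw [hy, div_lt_one h1]; linarith
  have habs : |y| < 1 := by rw [abs_of_pos hy0]; exact hy1
  have hsum := Real.hasSum_pow_div_log_of_abs_lt_one habs
  have h1y : 1 - y = 1 / (1 + x) := by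
    rw [hy]; field_simp; ring
  have hlog : -Real.log (1 - y) = Real.log (1 + x) := by
    rw [h1y, Real.log_div one_ne_zero (ne_of_gt h1), Real.log_one]; ring
  rw [hlog] at hsum
  have hle : ∑ k ∈ Finset.range (n + 1), y ^ (k + 1) / (k + 1) ≤ Real.log (1 + x) := by
    refine sum_le_hasSum _ (fun i _ => ?_) hsum
    positivity
  have hstep : Saux n x < ∑ k ∈ Finset.range (n + 1), y ^ (k + 1) / (k + 1) := by
    rw [Finset.sum_range_succ]
    have : 0 < y ^ (n + 1) / (n + 1) := by positivity
    simp only [Saux, ← hy]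
    linarith
  linarith

theorem log_div_self_strictly_completely_monotone (n : ℕ) (x : ℝ) (hx : 0 < x) :
    0 < (-1 : ℝ) ^ n * iteratedDeriv n (fun y : ℝ => Real.log (1 + y) / y) x := by
  rw [iter_eq n x hx]
  have h : (-1 : ℝ) ^ n * ((-1) ^ n * n.factorial * (Real.log (1 + x) - Saux n x) / x ^ (n + 1))
      = n.factorial * (Real.log (1 + x) - Saux n x) / x ^ (n + 1) := by
    rw [← mul_div_assoc, ← mul_assoc, ← mul_assoc, ← pow_add, ← two_mul, pow_mul]
    norm_num
  rw [h]
  have hG : 0 < Real.log (1 + x) - Saux n x := sub_pos.mpr (S_lt_log hx n)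
  have hf : (0 : ℝ) < n.factorial := by positivity
  positivity
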